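/- Quantum bound: let H be a (finite-dimensional) complex Hilbert space and for i = 1,…,N and a = 0,…,k−1 let σ̄_a^{(i)} be self-adjoint operators on H with (σ̄_a^{(i)})² = 1 and [σ̄_a^{(i)}, σ̄_b^{(j)}] = 0 whenever i ≠ j. Then for any unit vector ψ, B := (2/k)∑_{a,b}∑_{i≠j} ⟨ψ| σ̄_a^{(i)} σ̄_b^{(j)} |ψ⟩ cos(π(a−b)/k) ≥ −Nk. -/

import Mathlib

open Real
open Real Finset
open scoped RealInnerProductSpace

lemma qb_sum_exp (k : ℕ) (hk : 3 ≤ k) :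
    ∑ a : Fin k, Complex.exp ((2 * (π * a / k) : ℝ) * Complex.I) = 0 := by
  have hk0 : (k : ℕ) ≠ 0 := by omega
  have hprim := Complex.isPrimitiveRoot_exp k hk0
  have h := hprim.geom_sum_eq_zero (by omega)
  rw [Fin.sum_univ_eq_sum_range (fun a : ℕ =>
    Complex.exp ((2 * (π * a / k) : ℝ) * Complex.I)), ← h]
  refine Finset.sum_congr rfl fun a ha => ?_
  rw [← Complex.exp_nat_mul]
  congr 1
  have : (k : ℂ) ≠ 0 := by exact_mod_cast hk0
  push_cast
  field_simp

lemma qb_sum_cos (k : ℕ) (hk : 3 ≤ k) :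
    ∑ a : Fin k, Real.cos (2 * (π * a / k)) = 0 := by
  have h := congrArg Complex.re (qb_sum_exp k hk)
  rw [Complex.re_sum, Complex.zero_re] at h
  rw [← h]
  exact Finset.sum_congr rfl fun a _ => (Complex.exp_ofReal_mul_I_re _).symm

lemma qb_sum_sin (k : ℕ) (hk : 3 ≤ k) :
    ∑ a : Fin k, Real.sin (2 * (π * a / k)) = 0 := by
  have h := congrArg Complex.im (qb_sum_exp k hk)
  rw [Complex.im_sum, Complex.zero_im] at h
  rw [← h]
  exact Finset.sum_congr rfl fun a _ => (Complex.exp_ofReal_mul_I_im _).symm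

lemma qb_sum_cos_sq (k : ℕ) (hk : 3 ≤ k) :
    ∑ a : Fin k, Real.cos (π * a / k) ^ 2 = k / 2 := by
  have h := qb_sum_cos k hk
  calc ∑ a : Fin k, Real.cos (π * a / k) ^ 2
      = ∑ a : Fin k, (1 / 2 + Real.cos (2 * (π * a / k)) / 2) :=
        Finset.sum_congr rfl fun a _ => Real.cos_sq _
    _ = (∑ _a : Fin k, (1 / 2 : ℝ)) + (∑ a : Fin k, Real.cos (2 * (π * a / k))) / 2 := by
        rw [Finset.sum_add_distrib, Finset.sum_div]
    _ = k / 2 := by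
        rw [h, Finset.sum_const, Finset.card_univ, Fintype.card_fin, nsmul_eq_mul]
        ring

lemma qb_sum_sin_sq (k : ℕ) (hk : 3 ≤ k) :
    ∑ a : Fin k, Real.sin (π * a / k) ^ 2 = k / 2 := by
  have h := qb_sum_cos_sq k hk
  calc ∑ a : Fin k, Real.sin (π * a / k) ^ 2
      = ∑ a : Fin k, (1 - Real.cos (π * a / k) ^ 2) :=
        Finset.sum_congr rfl fun a _ => Real.sin_sq _
    _ = (∑ _a : Fin k, (1 : ℝ)) - ∑ a : Fin k, Real.cos (π * a / k) ^ 2 :=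
        Finset.sum_sub_distrib _ _
    _ = k / 2 := by
        rw [h, Finset.sum_const, Finset.card_univ, Fintype.card_fin, nsmul_eq_mul]
        ring

lemma qb_sum_cos_sin (k : ℕ) (hk : 3 ≤ k) :
    ∑ a : Fin k, Real.cos (π * a / k) * Real.sin (π * a / k) = 0 := by
  have h := qb_sum_sin k hk
  have h2 : ∀ a : Fin k, Real.cos (π * a / k) * Real.sin (π * a / k)
      = Real.sin (2 * (π * a / k)) / 2 := fun a => by
    rw [Real.sin_two_mul]; ring
  rw [Finset.sum_congr rfl fun a _ => h2 a, ← Finset.sum_div, h]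
  norm_num
section RealIP

open Real Finset
open scoped RealInnerProductSpace

variable {E : Type*} [NormedAddCommGroup E] [InnerProductSpace ℝ E]

lemma qb_quad_eq (k : ℕ) (c : Fin k → ℝ) (y : Fin k → E) :
    ∑ a : Fin k, ∑ b : Fin k, c a * c b * (inner ℝ (y a) (y b) : ℝ)
      = ‖∑ a : Fin k, c a • y a‖ ^ 2 := by
  rw [← real_inner_self_eq_norm_sq, sum_inner]
  refine Finset.sum_congr rfl fun a _ => ?_
  rw [inner_sum]
  refine Finset.sum_congr rfl fun b _ => ?_
  rw [real_inner_smul_left, real_inner_smul_right]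
  ring

lemma qb_cos_quad (k : ℕ) (y : Fin k → E) :
    ∑ a : Fin k, ∑ b : Fin k, Real.cos (π * ((a : ℝ) - (b : ℝ)) / k) * (inner ℝ (y a) (y b) : ℝ)
      = ‖∑ a : Fin k, Real.cos (π * a / k) • y a‖ ^ 2
        + ‖∑ a : Fin k, Real.sin (π * a / k) • y a‖ ^ 2 := by
  rw [← qb_quad_eq, ← qb_quad_eq, ← Finset.sum_add_distrib]
  refine Finset.sum_congr rfl fun a _ => ?_
  rw [← Finset.sum_add_distrib]
  refine Finset.sum_congr rfl fun b _ => ?_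
  rw [show π * ((a : ℝ) - (b : ℝ)) / k = π * a / k - π * b / k by ring, Real.cos_sub]
  ring

lemma qb_key_quad (k : ℕ) (hk : 3 ≤ k) (x : Fin k → E) (hx : ∀ a, ‖x a‖ = 1) :
    ‖∑ a : Fin k, Real.cos (π * a / k) • x a‖ ^ 2
      + ‖∑ a : Fin k, Real.sin (π * a / k) • x a‖ ^ 2 ≤ (k : ℝ) ^ 2 / 2 := by
  set c : Fin k → ℝ := fun a => Real.cos (π * a / k) with hc
  set s : Fin k → ℝ := fun a => Real.sin (π * a / k) with hs
  set C : E := ∑ a : Fin k, c a • x a with hCdef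
  set S : E := ∑ a : Fin k, s a • x a with hSdef
  have hcc : ∑ a : Fin k, c a ^ 2 = k / 2 := qb_sum_cos_sq k hk
  have hss : ∑ a : Fin k, s a ^ 2 = k / 2 := qb_sum_sin_sq k hk
  have hcs : ∑ a : Fin k, c a * s a = 0 := qb_sum_cos_sin k hk
  have hgen : ∀ (d : Fin k → ℝ) (Y : E),
      ∑ a : Fin k, d a * (inner ℝ (x a) (Y) : ℝ) = (inner ℝ (∑ a : Fin k, d a • x a) Y : ℝ) := by
    intro d Y
    rw [sum_inner]
    exact Finset.sum_congr rfl fun a _ => (real_inner_smul_left _ _ _).symm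
  have hCC : ∑ a : Fin k, c a * (inner ℝ (x a) (C) : ℝ) = ‖C‖ ^ 2 := by
    rw [hgen c C, ← hCdef, real_inner_self_eq_norm_sq]
  have hSS : ∑ a : Fin k, s a * (inner ℝ (x a) (S) : ℝ) = ‖S‖ ^ 2 := by
    rw [hgen s S, ← hSdef, real_inner_self_eq_norm_sq]
  have hxsum : ∑ a : Fin k, ‖x a‖ ^ 2 = (k : ℝ) := by
    simp [hx]
  have hexp : ∀ a : Fin k, ‖((k : ℝ) / 2) • x a - c a • C - s a • S‖ ^ 2
      = ‖x a‖ ^ 2 * ((k : ℝ) ^ 2 / 4) + c a ^ 2 * ‖C‖ ^ 2 + s a ^ 2 * ‖S‖ ^ 2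
        - (c a * (inner ℝ (x a) (C) : ℝ)) * k - (s a * (inner ℝ (x a) (S) : ℝ)) * k
        + (c a * s a) * (2 * (inner ℝ (C) (S) : ℝ)) := by
    intro a
    simp only [← real_inner_self_eq_norm_sq]
    simp only [inner_sub_left, inner_sub_right, real_inner_smul_left, real_inner_smul_right]
    rw [real_inner_comm C (x a), real_inner_comm S (x a), real_inner_comm S C]
    ring
  have hpos : (0 : ℝ) ≤ ∑ a : Fin k, ‖((k : ℝ) / 2) • x a - c a • C - s a • S‖ ^ 2 :=
    Finset.sum_nonneg fun a _ => sq_nonneg _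
  have hsum : ∑ a : Fin k, ‖((k : ℝ) / 2) • x a - c a • C - s a • S‖ ^ 2
      = (k : ℝ) ^ 3 / 4 - (k / 2) * (‖C‖ ^ 2 + ‖S‖ ^ 2) := by
    rw [Finset.sum_congr rfl fun a _ => hexp a]
    simp only [Finset.sum_add_distrib, Finset.sum_sub_distrib, ← Finset.sum_mul]
    rw [hcc, hss, hcs, hCC, hSS, hxsum]
    ring
  have hk' : (3 : ℝ) ≤ (k : ℝ) := by exact_mod_cast hk
  nlinarith [hpos, hsum, sq_nonneg (‖C‖ ^ 2 + ‖S‖ ^ 2)]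

end RealIP

/-- Quantum bound: if `σ̄_a⁽ⁱ⁾` are self-adjoint operators squaring to the identity,
with operators of distinct parties commuting, then for any unit vector `ψ` the Bell
value `B = (2/k) ∑_{a,b} ∑_{i≠j} ⟨ψ, σ̄_a⁽ⁱ⁾ σ̄_b⁽ʲ⁾ ψ⟩ cos(π(a-b)/k)` satisfies
`B ≥ -Nk`. -/
theorem quantum_bound_chained_bell (N k : ℕ) (hN : 2 ≤ N) (hk : 3 ≤ k)
    (H : Type*) [NormedAddCommGroup H] [InnerProductSpace ℂ H] [FiniteDimensional ℂ H]
    (σ : Fin N → Fin k → (H →L[ℂ] H))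
    (hsa : ∀ i a, IsSelfAdjoint (σ i a))
    (hsq : ∀ i a, σ i a * σ i a = 1)
    (hcomm : ∀ i j a b, i ≠ j → Commute (σ i a) (σ j b))
    (ψ : H) (hψ : ‖ψ‖ = 1) :
    -((N : ℝ) * k) ≤ (2 / (k : ℝ)) * ∑ a : Fin k, ∑ b : Fin k, ∑ i : Fin N, ∑ j : Fin N,
      if i ≠ j then
        (inner ℂ ψ (((σ i a * σ j b) : H →L[ℂ] H) ψ) : ℂ).re
          * Real.cos (π * ((a : ℝ) - (b : ℝ)) / k)
      else 0 := by
  letI : InnerProductSpace ℝ H := InnerProductSpace.complexToReal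
  have hk' : (3 : ℝ) ≤ (k : ℝ) := by exact_mod_cast hk
  have hk0 : (0 : ℝ) < (k : ℝ) := by linarith
  set v : Fin N → Fin k → H := fun i a => σ i a ψ with hv
  have hinner : ∀ (i j : Fin N) (a b : Fin k),
      (inner ℂ ψ (((σ i a * σ j b) : H →L[ℂ] H) ψ) : ℂ).re
        = (inner ℝ (v i a) (v j b) : ℝ) := by
    intro i j a b
    have hadj : ContinuousLinearMap.adjoint (σ i a) = σ i a := (hsa i a).adjoint_eq
    have h1 : (inner ℂ ψ (((σ i a * σ j b) : H →L[ℂ] H) ψ) : ℂ)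
        = inner ℂ ((σ i a) ψ) ((σ j b) ψ) := by
      rw [ContinuousLinearMap.mul_apply]
      conv_lhs => rw [← hadj]
      exact ContinuousLinearMap.adjoint_inner_right _ _ _
    rw [h1]
    rfl
  have hnorm : ∀ i a, ‖v i a‖ = 1 := by
    intro i a
    have h1 := hinner i i a a
    rw [hsq i a] at h1
    simp only [ContinuousLinearMap.one_apply] at h1
    have h2 : (inner ℂ ψ ψ : ℂ).re = 1 := by
      calc (inner ℂ ψ ψ : ℂ).re = (inner ℝ ψ ψ : ℝ) := rfl
        _ = 1 := by rw [real_inner_self_eq_norm_sq, hψ]; norm_num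
    have h3 : (inner ℝ (v i a) (v i a) : ℝ) = 1 := by rw [← h1, h2]
    rw [real_inner_self_eq_norm_sq] at h3
    calc ‖v i a‖ = Real.sqrt (‖v i a‖ ^ 2) := (Real.sqrt_sq (norm_nonneg _)).symm
      _ = 1 := by rw [h3, Real.sqrt_one]
  set w : Fin k → H := fun a => ∑ i : Fin N, v i a with hw
  have hstep : ∀ a b : Fin k,
      (∑ i : Fin N, ∑ j : Fin N, if i ≠ j then
          (inner ℂ ψ (((σ i a * σ j b) : H →L[ℂ] H) ψ) : ℂ).re
            * Real.cos (π * ((a : ℝ) - (b : ℝ)) / k) else 0)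
        = Real.cos (π * ((a : ℝ) - (b : ℝ)) / k) * (inner ℝ (w a) (w b) : ℝ)
          - ∑ i : Fin N,
              Real.cos (π * ((a : ℝ) - (b : ℝ)) / k) * (inner ℝ (v i a) (v i b) : ℝ) := by
    intro a b
    have h1 : ∀ i j : Fin N, (if i ≠ j then
        (inner ℂ ψ (((σ i a * σ j b) : H →L[ℂ] H) ψ) : ℂ).re
          * Real.cos (π * ((a : ℝ) - (b : ℝ)) / k) else 0)
        = Real.cos (π * ((a : ℝ) - (b : ℝ)) / k) * (inner ℝ (v i a) (v j b) : ℝ)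
          - (if i = j then
              Real.cos (π * ((a : ℝ) - (b : ℝ)) / k) * (inner ℝ (v i a) (v j b) : ℝ) else 0) := by
      intro i j
      by_cases h : i = j
      · simp [h]
      · simp only [h, if_neg, ne_eq, not_false_eq_true, if_true, if_false]
        rw [hinner i j a b, mul_comm, sub_zero]
    rw [Finset.sum_congr rfl fun i _ => Finset.sum_congr rfl fun j _ => h1 i j]
    simp only [Finset.sum_sub_distrib]
    congr 1
    · have h2 : (inner ℝ (w a) (w b) : ℝ) = ∑ i : Fin N, ∑ j : Fin N,
          (inner ℝ (v i a) (v j b) : ℝ) := by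
        rw [hw]
        rw [sum_inner]
        exact Finset.sum_congr rfl fun i _ => inner_sum _ _ _
      rw [h2, Finset.mul_sum]
      exact Finset.sum_congr rfl fun i _ => (Finset.mul_sum _ _ _).symm
    · exact Finset.sum_congr rfl fun i _ => by simp
  have hQw : (0 : ℝ) ≤ ∑ a : Fin k, ∑ b : Fin k,
      Real.cos (π * ((a : ℝ) - (b : ℝ)) / k) * (inner ℝ (w a) (w b) : ℝ) := by
    rw [qb_cos_quad]
    positivity
  have hQv : ∀ i : Fin N, ∑ a : Fin k, ∑ b : Fin k,
      Real.cos (π * ((a : ℝ) - (b : ℝ)) / k) * (inner ℝ (v i a) (v i b) : ℝ)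
        ≤ (k : ℝ) ^ 2 / 2 := fun i => by
    rw [qb_cos_quad]
    exact qb_key_quad k hk (v i) (hnorm i)
  have hBig : -((N : ℝ) * ((k : ℝ) ^ 2 / 2)) ≤ ∑ a : Fin k, ∑ b : Fin k, ∑ i : Fin N, ∑ j : Fin N,
      if i ≠ j then
        (inner ℂ ψ (((σ i a * σ j b) : H →L[ℂ] H) ψ) : ℂ).re
          * Real.cos (π * ((a : ℝ) - (b : ℝ)) / k)
      else 0 := by
    rw [Finset.sum_congr rfl fun a _ => Finset.sum_congr rfl fun b _ => hstep a b]
    simp only [Finset.sum_sub_distrib]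
    have hswap : ∑ a : Fin k, ∑ b : Fin k, ∑ i : Fin N,
        Real.cos (π * ((a : ℝ) - (b : ℝ)) / k) * (inner ℝ (v i a) (v i b) : ℝ)
        = ∑ i : Fin N, ∑ a : Fin k, ∑ b : Fin k,
        Real.cos (π * ((a : ℝ) - (b : ℝ)) / k) * (inner ℝ (v i a) (v i b) : ℝ) := by
      rw [Finset.sum_congr rfl fun a _ => Finset.sum_comm]
      exact Finset.sum_comm
    rw [hswap]
    have h3 : ∑ i : Fin N, ∑ a : Fin k, ∑ b : Fin k,
        Real.cos (π * ((a : ℝ) - (b : ℝ)) / k) * (inner ℝ (v i a) (v i b) : ℝ)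
        ≤ (N : ℝ) * ((k : ℝ) ^ 2 / 2) := by
      calc ∑ i : Fin N, ∑ a : Fin k, ∑ b : Fin k,
          Real.cos (π * ((a : ℝ) - (b : ℝ)) / k) * (inner ℝ (v i a) (v i b) : ℝ)
          ≤ ∑ _i : Fin N, (k : ℝ) ^ 2 / 2 := Finset.sum_le_sum fun i _ => hQv i
        _ = (N : ℝ) * ((k : ℝ) ^ 2 / 2) := by
            rw [Finset.sum_const, Finset.card_univ, Fintype.card_fin, nsmul_eq_mul]
    linarith
  calc -((N : ℝ) * k) = (2 / (k : ℝ)) * (-((N : ℝ) * ((k : ℝ) ^ 2 / 2))) := by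
        field_simp
    _ ≤ _ := mul_le_mul_of_nonneg_left hBig (by positivity)
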